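/- (Anyon–Fermi expansion of the reduced density matrix, ordering $O_-$.) Let $\kappa \in \mathbb{R}$, $L>0$, $V = [-L/2, L/2]$, $N \ge n \ge 1$, and let $\chi: \mathbb{R}^N \to \mathbb{C}$ be continuous and totally antisymmetric. Let $x_1' < x_1 < \cdots < x_n' < x_n$ be points of $V$ and set $I_- = [x_1',x_1] \cup \cdots \cup [x_n',x_n]$. Define $\chi^a = A_\kappa\, B\, \chi$ and the statistics constant $C_- = A_{-\kappa}(x_1',\dots,x_n')\, B(x_1',\dots,x_n')\, A_\kappa(x_1,\dots,x_n)\, B(x_1,\dots,x_n)$. Then $\int_{V^{N-n}} \overline{\chi^a(z_1,\dots,z_{N-n}, x_1',\dots,x_n')}\, \chi^a(z_1,\dots,z_{N-n}, x_1,\dots,x_n)\, dz = C_- \sum_{j=0}^{N-n} (-1)^j (1 + e^{-i\pi\kappa})^j \binom{N-n}{j} \int_{I_-^{\,j}} dw \int_{V^{N-n-j}} dz\, \overline{\chi(w_1,\dots,w_j, z_1,\dots,z_{N-n-j}, x_1',\dots,x_n')}\, \chi(w_1,\dots,w_j, z_1,\dots,z_{N-n-j}, x_1,\dots,x_n)$.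 -/

import Mathlib

open MeasureTheory

/-- The statistics factor `A_κ(z₁,…,z_N) = exp(iπκ ∑_{j<k} ε(z_j - z_k)/2)`. -/
noncomputable def Afac (κ : ℝ) {N : ℕ} (z : Fin N → ℝ) : ℂ :=
  Complex.exp (Complex.I * Real.pi * κ *
    (∑ j : Fin N, ∑ k ∈ Finset.univ.filter (fun k => j < k), Real.sign (z j - z k)) / 2)

/-- The statistics factor `B(z₁,…,z_N) = ∏_{j>k} ε(z_j - z_k)`. -/
noncomputable def Bfac {N : ℕ} (z : Fin N → ℝ) : ℝ :=
  ∏ j : Fin N, ∏ k ∈ Finset.univ.filter (fun k => k < j), Real.sign (z j - z k)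

lemma lt_castAdd_castAdd {m n : ℕ} (i i' : Fin m) :
    (Fin.castAdd n i < Fin.castAdd n i') ↔ i < i' := by
  simp only [Fin.lt_def, Fin.coe_castAdd]

lemma lt_castAdd_natAdd {m n : ℕ} (i : Fin m) (l : Fin n) :
    Fin.castAdd n i < Fin.natAdd m l := by
  simp only [Fin.lt_def, Fin.coe_castAdd, Fin.coe_natAdd]
  omega

lemma not_lt_natAdd_castAdd {m n : ℕ} (i : Fin m) (l : Fin n) :
    ¬ Fin.natAdd m l < Fin.castAdd n i := by
  simp only [Fin.lt_def, Fin.coe_castAdd, Fin.coe_natAdd]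
  omega

lemma lt_natAdd_natAdd {m n : ℕ} (l l' : Fin n) :
    (Fin.natAdd m l < Fin.natAdd m l') ↔ l < l' := by
  simp only [Fin.lt_def, Fin.coe_natAdd]
  omega

lemma sign_sum_append {m n : ℕ} (z : Fin m → ℝ) (y : Fin n → ℝ) :
    (∑ j : Fin (m+n), ∑ k ∈ Finset.univ.filter (fun k => j < k),
        Real.sign (Fin.append z y j - Fin.append z y k))
    = (∑ j : Fin m, ∑ k ∈ Finset.univ.filter (fun k => j < k), Real.sign (z j - z k))
    + (∑ j : Fin n, ∑ k ∈ Finset.univ.filter (fun k => j < k), Real.sign (y j - y k))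
    + ∑ i : Fin m, ∑ l : Fin n, Real.sign (z i - y l) := by
  simp_rw [Finset.sum_filter]
  rw [Fin.sum_univ_add]
  simp_rw [Fin.sum_univ_add]
  simp only [Fin.append_left, Fin.append_right, lt_castAdd_castAdd, lt_castAdd_natAdd,
    not_lt_natAdd_castAdd, lt_natAdd_natAdd, if_true, if_false]
  rw [Finset.sum_add_distrib]
  simp only [Finset.sum_const_zero, add_zero, zero_add]
  ring

lemma sign_prod_append {m n : ℕ} (z : Fin m → ℝ) (y : Fin n → ℝ) :
    (∏ j : Fin (m+n), ∏ k ∈ Finset.univ.filter (fun k => k < j),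
        Real.sign (Fin.append z y j - Fin.append z y k))
    = (∏ j : Fin m, ∏ k ∈ Finset.univ.filter (fun k => k < j), Real.sign (z j - z k))
    * (∏ j : Fin n, ∏ k ∈ Finset.univ.filter (fun k => k < j), Real.sign (y j - y k))
    * ∏ l : Fin n, ∏ i : Fin m, Real.sign (y l - z i) := by
  simp_rw [Finset.prod_filter]
  rw [Fin.prod_univ_add]
  simp_rw [Fin.prod_univ_add]
  simp only [Fin.append_left, Fin.append_right, lt_castAdd_castAdd, lt_castAdd_natAdd,
    not_lt_natAdd_castAdd, lt_natAdd_natAdd, if_true, if_false]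
  rw [Finset.prod_mul_distrib]
  simp only [Finset.prod_const_one, mul_one, one_mul]
  rw [Finset.prod_mul_distrib]
  ring

lemma Afac_append (κ : ℝ) {m n : ℕ} (z : Fin m → ℝ) (y : Fin n → ℝ) :
    Afac κ (Fin.append z y) = Afac κ z * Afac κ y *
      Complex.exp (Complex.I * Real.pi * κ *
        ((∑ i : Fin m, ∑ l : Fin n, Real.sign (z i - y l) : ℝ)) / 2) := by
  unfold Afac
  rw [sign_sum_append, ← Complex.exp_add, ← Complex.exp_add]
  congr 1
  push_cast
  ring

lemma Bfac_append {m n : ℕ} (z : Fin m → ℝ) (y : Fin n → ℝ) :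
    Bfac (Fin.append z y) = Bfac z * Bfac y * ∏ l : Fin n, ∏ i : Fin m, Real.sign (y l - z i) :=
  sign_prod_append z y

lemma conj_Afac (κ : ℝ) {N : ℕ} (w : Fin N → ℝ) :
    (starRingEnd ℂ) (Afac κ w) = Afac (-κ) w := by
  unfold Afac
  rw [← Complex.exp_conj]
  congr 1
  simp only [map_div₀, map_mul, Complex.conj_I, Complex.conj_ofReal]
  rw [map_ofNat]
  push_cast
  ring

lemma Afac_neg_mul (κ : ℝ) {N : ℕ} (w : Fin N → ℝ) : Afac (-κ) w * Afac κ w = 1 := by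
  unfold Afac
  rw [← Complex.exp_add, ← Complex.exp_zero]
  congr 1
  push_cast
  ring

lemma Bfac_sq {m : ℕ} {z : Fin m → ℝ} (hz : Function.Injective z) : Bfac z * Bfac z = 1 := by
  unfold Bfac
  rw [← Finset.prod_mul_distrib]
  apply Finset.prod_eq_one
  intro j _
  rw [← Finset.prod_mul_distrib]
  apply Finset.prod_eq_one
  intro k hk
  have hkj : k < j := (Finset.mem_filter.1 hk).2
  have hne : z j - z k ≠ 0 := sub_ne_zero.2 fun h => (ne_of_lt hkj) (hz h).symm
  rcases Real.sign_apply_eq_of_ne_zero _ hne with h | h <;> rw [h] <;> norm_num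

noncomputable def phiF (κ : ℝ) {n : ℕ} (x x' : Fin n → ℝ) (t : ℝ) : ℂ :=
  Complex.exp (Complex.I * Real.pi * κ *
      ((∑ l : Fin n, (Real.sign (t - x l) - Real.sign (t - x' l)) : ℝ)) / 2) *
    ((∏ l : Fin n, Real.sign (x' l - t) * Real.sign (x l - t) : ℝ) : ℂ)

lemma factor_combine (κ : ℝ) {m n : ℕ} (x x' : Fin n → ℝ) (z : Fin m → ℝ)
    (hz : Function.Injective z) :
    (starRingEnd ℂ) (Afac κ (Fin.append z x')) * ((Bfac (Fin.append z x') : ℝ) : ℂ) *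
      (Afac κ (Fin.append z x) * ((Bfac (Fin.append z x) : ℝ) : ℂ))
    = (Afac (-κ) x' * ((Bfac x' : ℝ) : ℂ) * (Afac κ x * ((Bfac x : ℝ) : ℂ))) *
        ∏ i : Fin m, phiF κ x x' (z i) := by
  have h1 : Afac (-κ) z * Afac κ z = 1 := Afac_neg_mul κ z
  have h2 : ((Bfac z : ℝ) : ℂ) * ((Bfac z : ℝ) : ℂ) = 1 := by
    rw [← Complex.ofReal_mul, Bfac_sq hz, Complex.ofReal_one]
  have h4 : (∏ l : Fin n, ∏ i : Fin m, Real.sign (x' l - z i)) *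
      (∏ l : Fin n, ∏ i : Fin m, Real.sign (x l - z i))
      = ∏ i : Fin m, ∏ l : Fin n, Real.sign (x' l - z i) * Real.sign (x l - z i) := by
    rw [show (∏ l : Fin n, ∏ i : Fin m, Real.sign (x' l - z i))
        = ∏ i : Fin m, ∏ l : Fin n, Real.sign (x' l - z i) from Finset.prod_comm,
      show (∏ l : Fin n, ∏ i : Fin m, Real.sign (x l - z i))
        = ∏ i : Fin m, ∏ l : Fin n, Real.sign (x l - z i) from Finset.prod_comm,
      ← Finset.prod_mul_distrib]
    exact Finset.prod_congr rfl fun i _ => (Finset.prod_mul_distrib).symm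
  have h3 : Complex.exp (Complex.I * Real.pi * ((-κ : ℝ) : ℂ) *
        ((∑ i : Fin m, ∑ l : Fin n, Real.sign (z i - x' l) : ℝ)) / 2)
      * Complex.exp (Complex.I * Real.pi * κ *
        ((∑ i : Fin m, ∑ l : Fin n, Real.sign (z i - x l) : ℝ)) / 2)
      = ∏ i : Fin m, Complex.exp (Complex.I * Real.pi * κ *
          ((∑ l : Fin n, (Real.sign (z i - x l) - Real.sign (z i - x' l)) : ℝ)) / 2) := by
    rw [← Complex.exp_sum, ← Complex.exp_add]
    congr 1
    push_cast
    simp only [Finset.sum_sub_distrib, mul_sub, sub_div]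
    simp only [← Finset.sum_div, ← Finset.mul_sum]
    ring
  have h5 : (∏ i : Fin m, phiF κ x x' (z i))
      = (∏ i : Fin m, Complex.exp (Complex.I * Real.pi * κ *
          ((∑ l : Fin n, (Real.sign (z i - x l) - Real.sign (z i - x' l)) : ℝ)) / 2))
        * ((∏ i : Fin m, ∏ l : Fin n, Real.sign (x' l - z i) * Real.sign (x l - z i) : ℝ) : ℂ) := by
    unfold phiF
    rw [Finset.prod_mul_distrib]
    push_cast
    ring
  rw [conj_Afac, Afac_append, Afac_append, Bfac_append, Bfac_append, h5, ← h3, ← h4]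
  push_cast
  calc _ = (Afac (-κ) z * Afac κ z) * (((Bfac z : ℝ) : ℂ) * ((Bfac z : ℝ) : ℂ)) *
        ((Afac (-κ) x' * ((Bfac x' : ℝ) : ℂ) * (Afac κ x * ((Bfac x : ℝ) : ℂ))) *
          (Complex.exp (Complex.I * Real.pi * ((-κ : ℝ) : ℂ) *
            ((∑ i : Fin m, ∑ l : Fin n, Real.sign (z i - x' l) : ℝ)) / 2)
          * Complex.exp (Complex.I * Real.pi * κ *
            ((∑ i : Fin m, ∑ l : Fin n, Real.sign (z i - x l) : ℝ)) / 2))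
          * (((∏ l : Fin n, ∏ i : Fin m, Real.sign (x' l - z i) : ℝ) : ℂ)
            * ((∏ l : Fin n, ∏ i : Fin m, Real.sign (x l - z i) : ℝ) : ℂ))) := by
        push_cast; ring
  _ = _ := by rw [h1, h2]; push_cast; ring

lemma psi_lo (κ a b t : ℝ) (h : t < a) (hab : a < b) :
    Complex.exp (Complex.I * Real.pi * κ * ((Real.sign (t - b) - Real.sign (t - a) : ℝ)) / 2) *
      ((Real.sign (a - t) * Real.sign (b - t) : ℝ) : ℂ) = 1 := by
  rw [Real.sign_of_neg (by linarith), Real.sign_of_neg (by linarith),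
    Real.sign_of_pos (by linarith), Real.sign_of_pos (by linarith)]
  norm_num

lemma psi_hi (κ a b t : ℝ) (h : b < t) (hab : a < b) :
    Complex.exp (Complex.I * Real.pi * κ * ((Real.sign (t - b) - Real.sign (t - a) : ℝ)) / 2) *
      ((Real.sign (a - t) * Real.sign (b - t) : ℝ) : ℂ) = 1 := by
  rw [Real.sign_of_pos (by linarith), Real.sign_of_pos (by linarith),
    Real.sign_of_neg (by linarith), Real.sign_of_neg (by linarith)]
  norm_num

lemma psi_mid (κ a b t : ℝ) (h1 : a < t) (h2 : t < b) :
    Complex.exp (Complex.I * Real.pi * κ * ((Real.sign (t - b) - Real.sign (t - a) : ℝ)) / 2) *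
      ((Real.sign (a - t) * Real.sign (b - t) : ℝ) : ℂ) = -Complex.exp (-(Complex.I * Real.pi * κ)) := by
  rw [Real.sign_of_neg (by linarith), Real.sign_of_pos (by linarith),
    Real.sign_of_neg (by linarith), Real.sign_of_pos (by linarith)]
  rw [show (((-1 - 1 : ℝ)) : ℂ) = -2 by norm_num,
    show ((( -1 * 1 : ℝ)) : ℂ) = -1 by norm_num,
    show Complex.I * Real.pi * κ * (-2) / 2 = -(Complex.I * Real.pi * κ) by ring]
  ring

lemma phiF_prod (κ : ℝ) {n : ℕ} (x x' : Fin n → ℝ) (t : ℝ) :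
    phiF κ x x' t = ∏ l : Fin n,
      (Complex.exp (Complex.I * Real.pi * κ *
          ((Real.sign (t - x l) - Real.sign (t - x' l) : ℝ)) / 2) *
        ((Real.sign (x' l - t) * Real.sign (x l - t) : ℝ) : ℂ)) := by
  unfold phiF
  conv_rhs => rw [Finset.prod_mul_distrib, ← Complex.exp_sum, ← Complex.ofReal_prod]
  congr 2
  push_cast
  simp only [← Finset.sum_div, ← Finset.mul_sum]

lemma phiF_eq (κ : ℝ) {n : ℕ} (x x' : Fin n → ℝ) (hx'x : ∀ j, x' j < x j)
    (hchain : ∀ j k : Fin n, j < k → x j < x' k) (t : ℝ) (ht : ∀ l, t ≠ x l ∧ t ≠ x' l) :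
    phiF κ x x' t = 1 + (-(1 + Complex.exp (-(Complex.I * Real.pi * κ)))) *
      (⋃ l, Set.Icc (x' l) (x l)).indicator (fun _ => (1 : ℂ)) t := by
  rw [phiF_prod]
  by_cases hmem : t ∈ ⋃ l, Set.Icc (x' l) (x l)
  · rw [Set.indicator_of_mem hmem]
    obtain ⟨L, hL⟩ := Set.mem_iUnion.1 hmem
    obtain ⟨hL1, hL2⟩ := hL
    have hL1' : x' L < t := lt_of_le_of_ne hL1 (fun h => (ht L).2 h.symm)
    have hL2' : t < x L := lt_of_le_of_ne hL2 (ht L).1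
    rw [Finset.prod_eq_single L]
    · rw [psi_mid κ (x' L) (x L) t hL1' hL2']; ring
    · intro l _ hl
      rcases lt_or_gt_of_ne hl with h | h
      · exact psi_hi κ (x' l) (x l) t (lt_trans (hchain l L h) hL1') (hx'x l)
      · exact psi_lo κ (x' l) (x l) t (lt_trans hL2' (hchain L l h)) (hx'x l)
    · intro h
      exact absurd (Finset.mem_univ L) h
  · rw [Set.indicator_of_notMem hmem]
    rw [Finset.prod_eq_one]
    · ring
    intro l _
    have : t ∉ Set.Icc (x' l) (x l) := fun h => hmem (Set.mem_iUnion.2 ⟨l, h⟩)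
    rw [Set.mem_Icc, not_and_or, not_le, not_le] at this
    rcases this with h | h
    · exact psi_lo κ (x' l) (x l) t h (hx'x l)
    · exact psi_hi κ (x' l) (x l) t h (hx'x l)

lemma hyp_null' (m : ℕ) (i j : Fin m) (hij : i ≠ j) :
    (volume {z : Fin m → ℝ | z i = z j}) = 0 := by
  have : {z : Fin m → ℝ | z i = z j} =
      (LinearMap.ker ((LinearMap.proj i : (Fin m → ℝ) →ₗ[ℝ] ℝ) - LinearMap.proj j) :
        Set (Fin m → ℝ)) := by
    ext z; simp [LinearMap.mem_ker, sub_eq_zero]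
  rw [this]
  apply Measure.addHaar_submodule
  intro h
  have h2 : Pi.single i (1:ℝ) ∈ LinearMap.ker
      ((LinearMap.proj i : (Fin m → ℝ) →ₗ[ℝ] ℝ) - LinearMap.proj j) := h ▸ Submodule.mem_top
  simp [LinearMap.mem_ker, Pi.single_eq_of_ne hij.symm] at h2

lemma ae_good (m : ℕ) {n : ℕ} (x x' : Fin n → ℝ) :
    ∀ᵐ z : Fin m → ℝ, Function.Injective z ∧ ∀ i, ∀ l, z i ≠ x l ∧ z i ≠ x' l := by
  have h1 : ∀ᵐ z : Fin m → ℝ, ∀ (i j : Fin m), i ≠ j → z i ≠ z j := by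
    refine MeasureTheory.ae_all_iff.2 fun i => MeasureTheory.ae_all_iff.2 fun j => ?_
    by_cases hij : i = j
    · exact MeasureTheory.ae_of_all _ fun z h => absurd hij h
    · have hnull := hyp_null' m i j hij
      have : ∀ᵐ z : Fin m → ℝ, z i ≠ z j := by
        rw [MeasureTheory.ae_iff]
        simpa using hnull
      exact this.mono fun z hz _ => hz
  have h2 : ∀ᵐ z : Fin m → ℝ, ∀ i, ∀ l : Fin n, z i ≠ x l ∧ z i ≠ x' l := by
    refine MeasureTheory.ae_all_iff.2 fun i => MeasureTheory.ae_all_iff.2 fun l => ?_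
    have hx : ∀ᵐ y : Fin m → ℝ ∂(Measure.pi fun _ => (volume : Measure ℝ)), y i ≠ x l :=
      MeasureTheory.Measure.ae_eval_ne (fun _ : Fin m => (volume : Measure ℝ)) i (x l)
    have hx' : ∀ᵐ y : Fin m → ℝ ∂(Measure.pi fun _ => (volume : Measure ℝ)), y i ≠ x' l :=
      MeasureTheory.Measure.ae_eval_ne (fun _ : Fin m => (volume : Measure ℝ)) i (x' l)
    rw [← MeasureTheory.volume_pi] at hx hx'
    exact hx.and hx'
  refine (h1.and h2).mono fun z hz => ⟨fun a b h => ?_, hz.2⟩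
  by_contra hne
  exact hz.1 a b hne h

lemma append_comp_perm {m n : ℕ} (z : Fin m → ℝ) (y : Fin n → ℝ) (τ : Equiv.Perm (Fin m)) :
    Fin.append (z ∘ τ) y = (Fin.append z y) ∘
      ((finSumFinEquiv (m := m) (n := n)).permCongr (τ.sumCongr (Equiv.refl (Fin n)))) := by
  funext w
  refine Fin.addCases (fun i => ?_) (fun l => ?_) w
  · simp [Equiv.permCongr_apply, finSumFinEquiv_symm_apply_castAdd, finSumFinEquiv_apply_left,
      Fin.append_left]
  · simp [Equiv.permCongr_apply, finSumFinEquiv_symm_apply_natAdd, finSumFinEquiv_apply_right,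
      Fin.append_right]

lemma F_perm {m n : ℕ} (χ : (Fin (m + n) → ℝ) → ℂ)
    (hanti : ∀ (π : Equiv.Perm (Fin (m + n))) (z : Fin (m + n) → ℝ),
      χ (z ∘ π) = ((Equiv.Perm.sign π : ℤ) : ℂ) * χ z)
    (x x' : Fin n → ℝ) (τ : Equiv.Perm (Fin m)) (z : Fin m → ℝ) :
    (starRingEnd ℂ) (χ (Fin.append (z ∘ τ) x')) * χ (Fin.append (z ∘ τ) x)
    = (starRingEnd ℂ) (χ (Fin.append z x')) * χ (Fin.append z x) := by
  rw [append_comp_perm, append_comp_perm, hanti, hanti]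
  set τ' := (finSumFinEquiv (m := m) (n := n)).permCongr (τ.sumCongr (Equiv.refl (Fin n)))
  set s : ℂ := ((Equiv.Perm.sign τ' : ℤ) : ℂ) with hs
  have hss : s * s = 1 := by
    rw [hs, ← Int.cast_mul, ← Units.val_mul, Int.units_mul_self]
    norm_num
  rw [map_mul]
  have hcs : (starRingEnd ℂ) s = s := by rw [hs]; exact map_intCast _ _
  rw [hcs]
  calc s * (starRingEnd ℂ) (χ (Fin.append z x')) * (s * χ (Fin.append z x))
      = (s * s) * ((starRingEnd ℂ) (χ (Fin.append z x')) * χ (Fin.append z x)) := by ring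
  _ = _ := by rw [hss, one_mul]

lemma setIntegral_perm {m : ℕ} (F : (Fin m → ℝ) → ℂ)
    (hF : ∀ (τ : Equiv.Perm (Fin m)) (z : Fin m → ℝ), F (z ∘ τ) = F z)
    (t : Fin m → Set ℝ) (ht : ∀ i, MeasurableSet (t i)) (σ : Equiv.Perm (Fin m)) :
    ∫ z in Set.univ.pi (fun i => t (σ i)), F z = ∫ z in Set.univ.pi t, F z := by
  have hmp := MeasureTheory.volume_measurePreserving_piCongrLeft (fun _ : Fin m => ℝ) σ
  have hemb := (MeasurableEquiv.piCongrLeft (fun _ : Fin m => ℝ) σ).measurableEmbedding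
  rw [← MeasureTheory.MeasurePreserving.setIntegral_preimage_emb hmp hemb F (Set.univ.pi t)]
  have hT : ∀ z : Fin m → ℝ,
      (MeasurableEquiv.piCongrLeft (fun _ : Fin m => ℝ) σ) z = z ∘ σ.symm := by
    intro z
    funext b
    rw [MeasurableEquiv.coe_piCongrLeft]
    conv_lhs => rw [show b = σ (σ.symm b) by simp]
    rw [Equiv.piCongrLeft_apply_apply]
    rfl
  have hset : (MeasurableEquiv.piCongrLeft (fun _ : Fin m => ℝ) σ) ⁻¹' (Set.univ.pi t)
      = Set.univ.pi (fun i => t (σ i)) := by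
    ext z
    simp only [Set.mem_preimage, hT, Set.mem_pi, Set.mem_univ, true_implies, Function.comp_apply]
    constructor
    · intro h i; simpa using h (σ i)
    · intro h b; simpa using h (σ.symm b)
  rw [hset]
  apply MeasureTheory.setIntegral_congr_fun
  · exact MeasurableSet.univ_pi fun i => ht (σ i)
  · intro z _
    show F z = F ((MeasurableEquiv.piCongrLeft (fun _ : Fin m => ℝ) σ) z)
    rw [hT]
    exact (hF σ.symm z).symm

lemma exists_perm_subset {m j : ℕ} (S : Finset (Fin m)) (hS : S.card = j) :
    ∃ σ : Equiv.Perm (Fin m), ∀ i, (σ i ∈ S ↔ (i : ℕ) < j) := by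
  have hjm : j ≤ m := by
    rw [← hS]
    simpa using Finset.card_le_univ S
  have e₁ : {i : Fin m // (i : ℕ) < j} ≃ Fin j :=
    { toFun := fun i => ⟨i.1, i.2⟩
      invFun := fun k => ⟨⟨k.1, lt_of_lt_of_le k.2 hjm⟩, k.2⟩
      left_inv := fun i => by ext; rfl
      right_inv := fun k => by ext; rfl }
  have hcard1 : Fintype.card {i : Fin m // (i : ℕ) < j} = j := by
    rw [Fintype.card_congr e₁, Fintype.card_fin]
  have hcard2 : Fintype.card {i : Fin m // i ∈ S} = j := by
    rw [Fintype.card_coe, hS]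
  have e : {i : Fin m // (i : ℕ) < j} ≃ {i : Fin m // i ∈ S} :=
    Fintype.equivOfCardEq (by rw [hcard1, hcard2])
  have f : {i : Fin m // ¬ (i : ℕ) < j} ≃ {i : Fin m // ¬ i ∈ S} :=
    Fintype.equivOfCardEq (by
      rw [Fintype.card_subtype_compl, Fintype.card_subtype_compl, hcard1, hcard2])
  refine ⟨Equiv.subtypeCongr e f, fun i => ?_⟩
  by_cases h : (i : ℕ) < j
  · simp only [h, iff_true]
    have : Equiv.subtypeCongr e f i = (e ⟨i, h⟩ : Fin m) := by
      unfold Equiv.subtypeCongr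
      rw [Equiv.trans_apply, Equiv.trans_apply, Equiv.sumCompl_symm_apply_of_pos (p := fun x : Fin m => (x:ℕ) < j) (a := i) h,
        Equiv.sumCongr_apply, Sum.map_inl, Equiv.sumCompl_apply_inl]
    rw [this]
    exact (e ⟨i, h⟩).2
  · simp only [h, iff_false]
    have : Equiv.subtypeCongr e f i = (f ⟨i, h⟩ : Fin m) := by
      unfold Equiv.subtypeCongr
      rw [Equiv.trans_apply, Equiv.trans_apply, Equiv.sumCompl_symm_apply_of_neg (p := fun x : Fin m => (x:ℕ) < j) (a := i) h,
        Equiv.sumCongr_apply, Sum.map_inr, Equiv.sumCompl_apply_inr]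
    rw [this]
    exact (f ⟨i, h⟩).2

open Finset in
lemma mysum_powerset (m : ℕ) (f : ℕ → ℂ) :
    ∑ S ∈ (Finset.univ : Finset (Finset (Fin m))), f S.card
      = ∑ j ∈ Finset.range (m+1), (m.choose j : ℂ) * f j := by
  rw [← Finset.powerset_univ, Finset.sum_powerset]
  rw [show #(Finset.univ : Finset (Fin m)) = m from by simp]
  refine Finset.sum_congr rfl fun j hj => ?_
  rw [Finset.sum_congr rfl (fun t ht => by rw [(Finset.mem_powersetCard.1 ht).2]),
    Finset.sum_const, Finset.card_powersetCard, Finset.card_univ, Fintype.card_fin,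
    nsmul_eq_mul]

lemma continuous_append {m n : ℕ} (y : Fin n → ℝ) :
    Continuous (fun z : Fin m → ℝ => Fin.append z y) := by
  apply continuous_pi
  intro w
  refine Fin.addCases (fun i => ?_) (fun l => ?_) w
  · simp only [Fin.append_left]
    exact continuous_apply i
  · simp only [Fin.append_right]
    exact continuous_const

/-- Anyon–Fermi expansion of the `n`-particle reduced density matrix, ordering `O₋`
(`x₁' < x₁ < ⋯ < xₙ' < xₙ`, `I₋ = ⋃ₗ [xₗ', xₗ]`), with `N = m + n` particles on
`V = [-L/2, L/2]` and `χᵃ = A_κ B χ` for a continuous totally antisymmetric `χ`. -/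
theorem anyon_fermi_rdm_minus (κ L : ℝ) (hL : 0 < L) (m n : ℕ) (hn : 1 ≤ n)
    (χ : (Fin (m + n) → ℝ) → ℂ) (hcont : Continuous χ)
    (hanti : ∀ (π : Equiv.Perm (Fin (m + n))) (z : Fin (m + n) → ℝ),
      χ (z ∘ π) = ((Equiv.Perm.sign π : ℤ) : ℂ) * χ z)
    (x x' : Fin n → ℝ)
    (hxV : ∀ j, x j ∈ Set.Icc (-(L / 2)) (L / 2))
    (hx'V : ∀ j, x' j ∈ Set.Icc (-(L / 2)) (L / 2))
    (hx'x : ∀ j, x' j < x j) (hchain : ∀ j k : Fin n, j < k → x j < x' k) :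
    (∫ z in Set.univ.pi (fun _ : Fin m => Set.Icc (-(L / 2)) (L / 2)),
        (starRingEnd ℂ) (Afac κ (Fin.append z x') * (Bfac (Fin.append z x') : ℂ) *
            χ (Fin.append z x')) *
          (Afac κ (Fin.append z x) * (Bfac (Fin.append z x) : ℂ) * χ (Fin.append z x)))
      = (Afac (-κ) x' * (Bfac x' : ℂ) * (Afac κ x * (Bfac x : ℂ))) *
          ∑ j ∈ Finset.range (m + 1),
            (-1) ^ j * (1 + Complex.exp (-(Complex.I * Real.pi * κ))) ^ j * (m.choose j : ℂ) *
              ∫ z in Set.univ.pi (fun i : Fin m =>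
                  if (i : ℕ) < j then ⋃ l, Set.Icc (x' l) (x l)
                  else Set.Icc (-(L / 2)) (L / 2)),
                (starRingEnd ℂ) (χ (Fin.append z x')) * χ (Fin.append z x) := by
  classical
  set V : Set ℝ := Set.Icc (-(L/2)) (L/2) with hV
  set I : Set ℝ := ⋃ l, Set.Icc (x' l) (x l) with hIdef
  set F : (Fin m → ℝ) → ℂ :=
    fun z => (starRingEnd ℂ) (χ (Fin.append z x')) * χ (Fin.append z x) with hFdef
  set c : ℂ := 1 + Complex.exp (-(Complex.I * Real.pi * κ)) with hc
  set C : ℂ := Afac (-κ) x' * ((Bfac x' : ℝ) : ℂ) * (Afac κ x * ((Bfac x : ℝ) : ℂ)) with hC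
  have hImeas : MeasurableSet I := MeasurableSet.iUnion fun l => measurableSet_Icc
  have hVmeas : MeasurableSet V := measurableSet_Icc
  have hIV : I ⊆ V := Set.iUnion_subset fun l => Set.Icc_subset_Icc (hx'V l).1 (hxV l).2
  have hFcont : Continuous F := by
    apply Continuous.mul
    · exact Complex.continuous_conj.comp (hcont.comp (continuous_append x'))
    · exact hcont.comp (continuous_append x)
  have hFsymm : ∀ (τ : Equiv.Perm (Fin m)) (z : Fin m → ℝ), F (z ∘ τ) = F z :=
    fun τ z => F_perm χ hanti x x' τ z
  have hboxmeas : MeasurableSet (Set.univ.pi fun _ : Fin m => V) :=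
    MeasurableSet.univ_pi fun _ => hVmeas
  have hboxcompact : IsCompact (Set.univ.pi fun _ : Fin m => V) :=
    isCompact_univ_pi fun _ => isCompact_Icc
  have hFint : IntegrableOn F (Set.univ.pi fun _ : Fin m => V) :=
    hFcont.continuousOn.integrableOn_compact hboxcompact
  have hBmeas : ∀ S : Finset (Fin m), MeasurableSet {z : Fin m → ℝ | ∀ i ∈ S, z i ∈ I} := by
    intro S
    have : {z : Fin m → ℝ | ∀ i ∈ S, z i ∈ I} = ⋂ i ∈ S, (fun z : Fin m → ℝ => z i) ⁻¹' I := by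
      ext z; simp
    rw [this]
    exact MeasurableSet.biInter S.countable_toSet fun i _ => measurable_pi_apply i hImeas
  have hprodind : ∀ (S : Finset (Fin m)) (z : Fin m → ℝ),
      (∏ i ∈ S, I.indicator (fun _ => (1:ℂ)) (z i)) * F z
        = Set.indicator {z : Fin m → ℝ | ∀ i ∈ S, z i ∈ I} F z := by
    intro S z
    by_cases h : ∀ i ∈ S, z i ∈ I
    · have hz : z ∈ {z : Fin m → ℝ | ∀ i ∈ S, z i ∈ I} := h
      rw [Set.indicator_of_mem hz,
        Finset.prod_eq_one (fun i hi => Set.indicator_of_mem (h i hi) _), one_mul]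
    · have hz : z ∉ {z : Fin m → ℝ | ∀ i ∈ S, z i ∈ I} := h
      rw [Set.indicator_of_notMem hz]
      push_neg at h
      obtain ⟨i, hi, hzi⟩ := h
      rw [Finset.prod_eq_zero hi (Set.indicator_of_notMem hzi _), zero_mul]
  have hSint : ∀ S : Finset (Fin m),
      IntegrableOn (fun z => (∏ i ∈ S, I.indicator (fun _ => (1:ℂ)) (z i)) * F z)
        (Set.univ.pi fun _ : Fin m => V) := by
    intro S
    have heq : (fun z : Fin m → ℝ => (∏ i ∈ S, I.indicator (fun _ => (1:ℂ)) (z i)) * F z)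
        = Set.indicator {z : Fin m → ℝ | ∀ i ∈ S, z i ∈ I} F := funext (hprodind S)
    rw [heq]
    exact hFint.indicator (hBmeas S)
  -- step 1+2: rewrite the integrand a.e.
  have step12 : (∫ z in Set.univ.pi (fun _ : Fin m => V),
        (starRingEnd ℂ) (Afac κ (Fin.append z x') * ((Bfac (Fin.append z x') : ℝ) : ℂ) *
            χ (Fin.append z x')) *
          (Afac κ (Fin.append z x) * ((Bfac (Fin.append z x) : ℝ) : ℂ) * χ (Fin.append z x)))
      = ∫ z in Set.univ.pi (fun _ : Fin m => V),
          C * ∑ S : Finset (Fin m),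
            (-c) ^ S.card * ((∏ i ∈ S, I.indicator (fun _ => (1:ℂ)) (z i)) * F z) := by
    apply MeasureTheory.setIntegral_congr_ae hboxmeas
    filter_upwards [ae_good m x x'] with z hz _
    have hphi : (∏ i : Fin m, phiF κ x x' (z i))
        = ∑ S : Finset (Fin m), (-c) ^ S.card * ∏ i ∈ S, I.indicator (fun _ => (1:ℂ)) (z i) := by
      rw [Finset.prod_congr rfl
        (fun i _ => phiF_eq κ x x' hx'x hchain (z i) (fun l => hz.2 i l))]
      rw [Finset.prod_congr rfl (fun i _ => add_comm (1 : ℂ) _)]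
      rw [Finset.prod_add, Finset.powerset_univ]
      refine Finset.sum_congr rfl fun S hS => ?_
      rw [Finset.prod_const_one, mul_one, Finset.prod_mul_distrib, Finset.prod_const]
    calc (starRingEnd ℂ) (Afac κ (Fin.append z x') * ((Bfac (Fin.append z x') : ℝ) : ℂ) *
            χ (Fin.append z x')) *
          (Afac κ (Fin.append z x) * ((Bfac (Fin.append z x) : ℝ) : ℂ) * χ (Fin.append z x))
        = ((starRingEnd ℂ) (Afac κ (Fin.append z x')) * ((Bfac (Fin.append z x') : ℝ) : ℂ) *
            (Afac κ (Fin.append z x) * ((Bfac (Fin.append z x) : ℝ) : ℂ))) * F z := by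
          simp only [map_mul, Complex.conj_ofReal, hFdef]
          ring
    _ = (C * ∏ i : Fin m, phiF κ x x' (z i)) * F z := by
          rw [factor_combine κ x x' z hz.1]
    _ = C * ∑ S : Finset (Fin m),
            (-c) ^ S.card * ((∏ i ∈ S, I.indicator (fun _ => (1:ℂ)) (z i)) * F z) := by
          rw [hphi, mul_assoc, Finset.sum_mul]
          simp only [mul_assoc]
  -- evaluate each subset integral
  have hint_eval : ∀ S : Finset (Fin m),
      (∫ z in Set.univ.pi (fun _ : Fin m => V),
        (∏ i ∈ S, I.indicator (fun _ => (1:ℂ)) (z i)) * F z)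
      = ∫ z in Set.univ.pi (fun i : Fin m => if (i : ℕ) < S.card then I else V), F z := by
    intro S
    rw [MeasureTheory.setIntegral_congr_fun hboxmeas (fun z _ => hprodind S z)]
    rw [MeasureTheory.setIntegral_indicator (hBmeas S)]
    have hseteq : (Set.univ.pi fun _ : Fin m => V) ∩ {z : Fin m → ℝ | ∀ i ∈ S, z i ∈ I}
        = Set.univ.pi (fun i : Fin m => if i ∈ S then I else V) := by
      ext z
      simp only [Set.mem_inter_iff, Set.mem_pi, Set.mem_univ, true_implies, Set.mem_setOf_eq]
      constructor
      · rintro ⟨h1, h2⟩ i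
        by_cases hi : i ∈ S
        · simpa [hi] using h2 i hi
        · simpa [hi] using h1 i
      · intro h
        constructor
        · intro i
          by_cases hi : i ∈ S
          · exact hIV (by simpa [hi] using h i)
          · simpa [hi] using h i
        · intro i hi
          simpa [hi] using h i
    rw [hseteq]
    obtain ⟨σ, hσ⟩ := exists_perm_subset S rfl
    have hperm := setIntegral_perm F hFsymm (fun i : Fin m => if i ∈ S then I else V)
      (fun i => by by_cases hi : i ∈ S <;> simp [hi, hImeas, hVmeas]) σ
    have hfun : (fun i : Fin m => if σ i ∈ S then I else V)
        = (fun i : Fin m => if (i : ℕ) < S.card then I else V) :=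
      funext fun i => if_congr (hσ i) rfl rfl
    rw [hfun] at hperm
    exact hperm.symm
  -- assemble
  rw [step12, MeasureTheory.integral_const_mul]
  congr 1
  rw [MeasureTheory.integral_finset_sum Finset.univ
    (fun S _ => ((hSint S).const_mul ((-c) ^ S.card)))]
  have : ∀ S : Finset (Fin m),
      (∫ z in Set.univ.pi (fun _ : Fin m => V),
        (-c) ^ S.card * ((∏ i ∈ S, I.indicator (fun _ => (1:ℂ)) (z i)) * F z))
      = (-c) ^ S.card *
          ∫ z in Set.univ.pi (fun i : Fin m => if (i : ℕ) < S.card then I else V), F z := by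
    intro S
    rw [MeasureTheory.integral_const_mul, hint_eval S]
  rw [Finset.sum_congr rfl fun S _ => this S]
  rw [mysum_powerset m (fun j => (-c) ^ j *
    ∫ z in Set.univ.pi (fun i : Fin m => if (i : ℕ) < j then I else V), F z)]
  refine Finset.sum_congr rfl fun j _ => ?_
  rw [neg_pow]
  ring
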